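/- Every complex root z of P satisfies |z| ≤ r, where r denotes the unique positive real root of P. -/

import Mathlib

open Polynomial

/-- Every complex root `z` of `P` satisfies `|z| ≤ r`, where `r` is the unique
positive real root of `P`. -/
theorem abs_root_le_principal_root
    (k : ℕ) (hk : 1 ≤ k) (c : ℕ → ℕ) (hck : 0 < c k)
    (P : Polynomial ℂ)
    (hP : P = X ^ k - ∑ i ∈ Finset.Icc 1 k, C (c i : ℂ) * X ^ (k - i))
    (r : ℝ) (hr : 0 < r) (hroot : P.IsRoot (r : ℂ))
    (huniq : ∀ s : ℝ, 0 < s → P.IsRoot (s : ℂ) → s = r) :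
    ∀ z : ℂ, P.IsRoot z → ‖z‖ ≤ r := by
  intro z hz
  by_contra hlt
  push_neg at hlt
  set t := ‖z‖ with ht
  have ht0 : 0 < t := lt_trans hr hlt
  -- evaluate P at z
  have hz' : z ^ k = ∑ i ∈ Finset.Icc 1 k, (c i : ℂ) * z ^ (k - i) := by
    have h := hz
    rw [hP] at h
    simp only [IsRoot, eval_sub, eval_pow, eval_X, eval_finset_sum, eval_mul, eval_C] at h
    exact sub_eq_zero.mp h
  -- evaluate P at r
  have hrC : (r : ℂ) ^ k = ∑ i ∈ Finset.Icc 1 k, (c i : ℂ) * (r : ℂ) ^ (k - i) := by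
    have h := hroot
    rw [hP] at h
    simp only [IsRoot, eval_sub, eval_pow, eval_X, eval_finset_sum, eval_mul, eval_C] at h
    exact sub_eq_zero.mp h
  have hr' : r ^ k = ∑ i ∈ Finset.Icc 1 k, (c i : ℝ) * r ^ (k - i) := by
    exact_mod_cast hrC
  -- triangle inequality
  have habs : t ^ k ≤ ∑ i ∈ Finset.Icc 1 k, (c i : ℝ) * t ^ (k - i) := by
    calc t ^ k = ‖z ^ k‖ := (norm_pow z k).symm
      _ = ‖∑ i ∈ Finset.Icc 1 k, (c i : ℂ) * z ^ (k - i)‖ := by rw [hz']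
      _ ≤ ∑ i ∈ Finset.Icc 1 k, ‖(c i : ℂ) * z ^ (k - i)‖ :=
          norm_sum_le _ _
      _ = ∑ i ∈ Finset.Icc 1 k, (c i : ℝ) * t ^ (k - i) := by
          refine Finset.sum_congr rfl fun i _ => ?_
          rw [norm_mul, norm_pow, Complex.norm_natCast]
  -- key termwise inequality
  have key : ∀ i ∈ Finset.Icc 1 k,
      (c i : ℝ) * t ^ (k - i) * r ^ (k - 1) ≤ (c i : ℝ) * r ^ (k - i) * t ^ (k - 1) := by
    intro i hi
    simp only [Finset.mem_Icc] at hi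
    have h1 : r ^ (k - 1) = r ^ (i - 1) * r ^ (k - i) := by
      rw [← pow_add]; congr 1; omega
    have h2 : t ^ (k - 1) = t ^ (i - 1) * t ^ (k - i) := by
      rw [← pow_add]; congr 1; omega
    rw [h1, h2]
    have hri : r ^ (i - 1) ≤ t ^ (i - 1) := pow_le_pow_left₀ hr.le hlt.le _
    have hrk : (0:ℝ) ≤ r ^ (k - i) := by positivity
    have htk : (0:ℝ) ≤ t ^ (k - i) := by positivity
    have hc : (0:ℝ) ≤ (c i : ℝ) := Nat.cast_nonneg _
    nlinarith [mul_le_mul_of_nonneg_left hri (show (0:ℝ) ≤ (c i : ℝ) * t ^ (k - i) * r ^ (k - i) by positivity)]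
  have hsum : (∑ i ∈ Finset.Icc 1 k, (c i : ℝ) * t ^ (k - i)) * r ^ (k - 1)
      ≤ r ^ k * t ^ (k - 1) := by
    rw [Finset.sum_mul, hr', Finset.sum_mul]
    exact Finset.sum_le_sum key
  have hrk1 : (0:ℝ) < r ^ (k - 1) := by positivity
  have htk1 : (0:ℝ) < t ^ (k - 1) := by positivity
  have hte : t ^ k = t * t ^ (k - 1) := by
    rw [← pow_succ']; congr 1; omega
  have hre : r ^ k = r * r ^ (k - 1) := by
    rw [← pow_succ']; congr 1; omega
  nlinarith [mul_le_mul_of_nonneg_right habs hrk1.le,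
    mul_lt_mul_of_pos_right hlt (mul_pos hrk1 htk1)]
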